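/- Discontinuity set of the delayed intensity for general kernels: let U ∈ ℕ, let S₁, …, S_U be finite sets of real event times, let μ ∈ ℝ, δ_{u'} ≥ 0, and let g_{u'} : ℝ → ℝ satisfy g_{u'}(x) = 0 for x < 0, g_{u'}(0) > 0, g_{u'} right-continuous at 0, and g_{u'} continuous on (0, ∞). Define λ(t) = μ + Σ_{u'=1}^U Σ_{s ∈ S_{u'}, s + δ_{u'} < t} g_{u'}(t − δ_{u'} − s). Then λ is discontinuous at τ ∈ ℝ if and only if τ ∈ ⋃_{u'=1}^U (δ_{u'} + S_{u'}); moreover at each such τ the right-hand limit exceeds λ(τ) by Σ_{u' : τ ∈ δ_{u'} + S_{u'}} g_{u'}(0) > 0. -/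
import Mathlib


open Set Filter

/-- Single-term jump function. -/
noncomputable def Fjump (g : ℝ → ℝ) (d s t : ℝ) : ℝ :=
  if s + d < t then g (t - d - s) else 0

lemma Fjump_eq_zero_of_le {g : ℝ → ℝ} {d s t : ℝ} (h : t ≤ s + d) :
    Fjump g d s t = 0 := if_neg (not_lt.2 h)

lemma Fjump_continuousAt {g : ℝ → ℝ} {d s τ : ℝ}
    (hgc : ContinuousOn g (Set.Ioi (0 : ℝ))) (h : τ ≠ s + d) :
    ContinuousAt (Fjump g d s) τ := by
  rcases lt_or_gt_of_ne h with hlt | hgt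
  · have hev : ∀ᶠ t in nhds τ, Fjump g d s t = 0 := by
      filter_upwards [Iio_mem_nhds hlt] with t ht
      exact Fjump_eq_zero_of_le (le_of_lt ht)
    exact continuousAt_const.congr (hev.mono fun t ht => ht.symm)
  · have hpos : (0 : ℝ) < τ - d - s := by linarith
    have hc : ContinuousAt (fun t => g (t - d - s)) τ := by
      have hgτ : ContinuousAt g (τ - d - s) :=
        hgc.continuousAt (Ioi_mem_nhds hpos)
      have hsub : ContinuousAt (fun t : ℝ => t - d - s) τ :=
        (continuousAt_id.sub continuousAt_const).sub continuousAt_const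
      exact hgτ.tendsto.comp hsub
    have hev : ∀ᶠ t in nhds τ, (fun t => g (t - d - s)) t = Fjump g d s t := by
      filter_upwards [Ioi_mem_nhds hgt] with t ht
      exact (if_pos ht).symm
    exact hc.congr hev

lemma Fjump_tendsto_right {g : ℝ → ℝ} {d s : ℝ}
    (hgrc : ContinuousWithinAt g (Set.Ici (0 : ℝ)) 0) :
    Tendsto (Fjump g d s) (nhdsWithin (s + d) (Set.Ioi (s + d))) (nhds (g 0)) := by
  have h1 : Tendsto (fun t => t - d - s) (nhdsWithin (s + d) (Set.Ioi (s + d)))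
      (nhdsWithin 0 (Set.Ici (0 : ℝ))) := by
    apply tendsto_nhdsWithin_of_tendsto_nhds_of_eventually_within
    · have : Tendsto (fun t : ℝ => t - d - s) (nhds (s + d)) (nhds (s + d - d - s)) :=
        ((continuous_id.sub continuous_const).sub continuous_const).tendsto _
      simpa using this.mono_left nhdsWithin_le_nhds
    · filter_upwards [self_mem_nhdsWithin] with t ht
      have : (s + d : ℝ) < t := ht
      have : (0 : ℝ) < t - d - s := by linarith
      exact le_of_lt this
  have h2 : Tendsto (fun t => g (t - d - s)) (nhdsWithin (s + d) (Set.Ioi (s + d)))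
      (nhds (g 0)) := hgrc.tendsto.comp h1
  apply h2.congr'
  filter_upwards [self_mem_nhdsWithin] with t ht
  exact (if_pos ht).symm

/-- Discontinuity set of the delayed intensity for general kernels: `λ` is discontinuous at `τ`
iff `τ` lies in the union of delayed arrival sets `δ_{u'} + S_{u'}`; moreover at each such `τ`
the right-hand limit exceeds `λ(τ)` by `Σ_{u' : τ ∈ δ_{u'} + S_{u'}} g_{u'}(0) > 0`. -/
theorem delayed_intensity_discontinuity_set
    (U : ℕ) (S : Fin U → Finset ℝ) (μ : ℝ) (δ : Fin U → ℝ) (hδ : ∀ u', 0 ≤ δ u')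
    (g : Fin U → ℝ → ℝ)
    (hg0 : ∀ u', ∀ x : ℝ, x < 0 → g u' x = 0)
    (hgpos : ∀ u', 0 < g u' 0)
    (hgrc : ∀ u', ContinuousWithinAt (g u') (Set.Ici (0 : ℝ)) 0)
    (hgc : ∀ u', ContinuousOn (g u') (Set.Ioi (0 : ℝ)))
    (lam : ℝ → ℝ)
    (hlam : ∀ t : ℝ, lam t = μ + ∑ u',
      ∑ s ∈ (S u').filter (fun s => s + δ u' < t), g u' (t - δ u' - s)) :
    ∀ τ : ℝ,
      (¬ ContinuousAt lam τ ↔ τ ∈ ⋃ u', (fun s => δ u' + s) '' (S u' : Set ℝ)) ∧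
      (τ ∈ ⋃ u', (fun s => δ u' + s) '' (S u' : Set ℝ) →
        ∃ L : ℝ, Tendsto lam (nhdsWithin τ (Set.Ioi τ)) (nhds L) ∧
          L - lam τ = ∑ u' ∈ Finset.univ.filter (fun u' => τ - δ u' ∈ S u'), g u' 0 ∧
          0 < ∑ u' ∈ Finset.univ.filter (fun u' => τ - δ u' ∈ S u'), g u' 0) := by
  have hlam' : lam = fun t => μ + ∑ u', ∑ s ∈ S u', Fjump (g u') (δ u') s t := by
    funext t
    rw [hlam]
    congr 1
    refine Finset.sum_congr rfl fun u _ => ?_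
    rw [Finset.sum_filter]
    rfl
  intro τ
  have hmem : (τ ∈ ⋃ u', (fun s => δ u' + s) '' (S u' : Set ℝ)) ↔ ∃ u, τ - δ u ∈ S u := by
    simp only [mem_iUnion, mem_image, Finset.mem_coe]
    constructor
    · rintro ⟨u, s, hs, rfl⟩
      exact ⟨u, by simpa using hs⟩
    · rintro ⟨u, hu⟩
      exact ⟨u, τ - δ u, hu, by ring⟩
  -- the right limit
  set L : ℝ := μ + ∑ u', ∑ s ∈ S u',
      (if s + δ u' = τ then g u' 0 else Fjump (g u') (δ u') s τ) with hLdef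
  have hL : Tendsto lam (nhdsWithin τ (Set.Ioi τ)) (nhds L) := by
    rw [hlam', hLdef]
    apply Tendsto.const_add
    apply tendsto_finset_sum
    intro u _
    apply tendsto_finset_sum
    intro s _
    by_cases h : s + δ u = τ
    · rw [if_pos h]
      have := Fjump_tendsto_right (g := g u) (d := δ u) (s := s) (hgrc u)
      rwa [h] at this
    · rw [if_neg h]
      exact ((Fjump_continuousAt (hgc u) (fun he => h he.symm)).tendsto).mono_left
        nhdsWithin_le_nhds
  have hdiff : L - lam τ =
      ∑ u' ∈ Finset.univ.filter (fun u' => τ - δ u' ∈ S u'), g u' 0 := by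
    rw [hlam', hLdef]
    simp only
    have : (μ + ∑ u', ∑ s ∈ S u', (if s + δ u' = τ then g u' 0 else Fjump (g u') (δ u') s τ))
        - (μ + ∑ u', ∑ s ∈ S u', Fjump (g u') (δ u') s τ)
        = ∑ u', (∑ s ∈ S u', (if s + δ u' = τ then g u' 0 else Fjump (g u') (δ u') s τ)
            - ∑ s ∈ S u', Fjump (g u') (δ u') s τ) := by
      rw [Finset.sum_sub_distrib]; ring
    rw [this]
    rw [Finset.sum_filter]
    refine Finset.sum_congr rfl fun u _ => ?_
    rw [← Finset.sum_sub_distrib]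
    have hterm : ∀ s ∈ S u,
        (if s + δ u = τ then g u 0 else Fjump (g u) (δ u) s τ) - Fjump (g u) (δ u) s τ
        = if s = τ - δ u then g u 0 else 0 := by
      intro s _
      by_cases h : s + δ u = τ
      · rw [if_pos h, if_pos (by linarith), Fjump_eq_zero_of_le (le_of_eq h.symm)]
        ring
      · rw [if_neg h, if_neg (fun hs => h (by rw [hs]; ring))]
        ring
    rw [Finset.sum_congr rfl hterm, Finset.sum_ite_eq' (S u) (τ - δ u) (fun _ => g u 0)]
  constructor
  · constructor
    · intro hdisc
      by_contra hnm
      apply hdisc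
      rw [hlam']
      have : ∀ u : Fin U, ∀ s ∈ S u, τ ≠ s + δ u := by
        intro u s hs he
        exact hnm (hmem.mpr ⟨u, by rw [he]; simpa using hs⟩)
      exact continuousAt_const.add (tendsto_finset_sum _ fun u _ =>
        tendsto_finset_sum _ fun s hs => Fjump_continuousAt (hgc u) (this u s hs))
    · intro hm
      obtain ⟨u0, hu0⟩ := hmem.mp hm
      have hpos : 0 < ∑ u' ∈ Finset.univ.filter (fun u' => τ - δ u' ∈ S u'), g u' 0 := by
        apply Finset.sum_pos (fun u _ => hgpos u)
        exact ⟨u0, Finset.mem_filter.mpr ⟨Finset.mem_univ _, hu0⟩⟩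
      intro hcont
      have h1 : Tendsto lam (nhdsWithin τ (Set.Ioi τ)) (nhds (lam τ)) :=
        hcont.tendsto.mono_left nhdsWithin_le_nhds
      have : L = lam τ := tendsto_nhds_unique hL h1
      rw [this] at hdiff
      simp only [sub_self] at hdiff
      linarith [hdiff ▸ hpos]
  · intro hm
    obtain ⟨u0, hu0⟩ := hmem.mp hm
    refine ⟨L, hL, hdiff, ?_⟩
    apply Finset.sum_pos (fun u _ => hgpos u)
    exact ⟨u0, Finset.mem_filter.mpr ⟨Finset.mem_univ _, hu0⟩⟩
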